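/- Let S be a semigroupoid, (α,X) a partial action of S, and (δ,β,E) its universal globalization constructed via E = D/≈ with δ(x) = [δ,x]. Write X₁ = ⋃_{s∈S}(ₛX ∪ X_s), X₀ = X \ X₁, E₁ = ⋃_{s∈S}(ₛE ∪ E_s), and E₀ = E \ E₁. Then δ(X₀) = E₀. Consequently, (α,X) is non-degenerate (i.e. X₀ = ∅) if and only if (β,E) is non-degenerate (i.e. E₀ = ∅). -/

import Mathlib

universe u v w

/-- An (Exel) semigroupoid: a set `S` with a set of composable pairs (encoded by
the relation `comp`) and a multiplication, associative in Exel's sense. -/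
structure Semigroupoid (S : Type u) where
  comp : S → S → Prop
  mul : S → S → S
  assoc : ∀ s t r : S,
    ((comp s t ∧ comp t r) ∨ (comp s t ∧ comp (mul s t) r) ∨ (comp t r ∧ comp s (mul t r))) →
      comp s t ∧ comp t r ∧ comp (mul s t) r ∧ comp s (mul t r) ∧
        mul (mul s t) r = mul s (mul t r)

namespace Semigroupoid

variable {S : Type u} {X : Type v}

/-- `S^s = {t | (s,t) ∈ S⁽²⁾}`. -/
def rightComp (G : Semigroupoid S) (s : S) : Set S := {t | G.comp s t}

/-- `X_s = α_s(ₛX)`. -/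
def img (dom : S → Set X) (act : S → X → X) (s : S) : Set X := act s '' dom s

/-- Condition (P1): `α_t⁻¹(ₛX ∩ X_t) = ₜX ∩ ₛₜX` for composable `(s,t)`. -/
def P1 (G : Semigroupoid S) (dom : S → Set X) (act : S → X → X) : Prop :=
  ∀ s t : S, G.comp s t →
    {x | x ∈ dom t ∧ act t x ∈ dom s ∩ img dom act t} = dom t ∩ dom (G.mul s t)

/-- Condition (P2): `α_s ∘ α_t = α_{st}` on `ₜX ∩ ₛₜX` for composable `(s,t)`. -/
def P2 (G : Semigroupoid S) (dom : S → Set X) (act : S → X → X) : Prop :=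
  ∀ s t : S, G.comp s t → ∀ x ∈ dom t ∩ dom (G.mul s t),
    act s (act t x) = act (G.mul s t) x

/-- A partial action of the semigroupoid on `X`. -/
def IsPartialAction (G : Semigroupoid S) (dom : S → Set X) (act : S → X → X) : Prop :=
  P1 G dom act ∧ P2 G dom act

/-- Condition (G1): if `S^s = S^t ≠ ∅` then `ₛX = ₜX`. -/
def G1 (G : Semigroupoid S) (dom : S → Set X) : Prop :=
  ∀ s t : S, G.rightComp s = G.rightComp t → (G.rightComp s).Nonempty → dom s = dom t

/-- Condition (G2): if `(s,t) ∈ S⁽²⁾` then `ₜX = ₛₜX`. -/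
def G2 (G : Semigroupoid S) (dom : S → Set X) : Prop :=
  ∀ s t : S, G.comp s t → dom t = dom (G.mul s t)

/-- A global action of the semigroupoid on `X`. -/
def IsGlobalAction (G : Semigroupoid S) (dom : S → Set X) (act : S → X → X) : Prop :=
  IsPartialAction G dom act ∧ G1 G dom ∧ G2 G dom

/-- A partial action is non-degenerate when `X = ⋃ₛ (ₛX ∪ X_s)`. -/
def Nondegenerate (G : Semigroupoid S) (dom : S → Set X) (act : S → X → X) : Prop :=
  (⋃ s : S, dom s ∪ img dom act s) = Set.univ

section Morphisms

variable {Y : Type w}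

/-- A morphism of partial actions `φ : (α,X) → (β,Y)`. -/
def IsMorphism (G : Semigroupoid S) (domX : S → Set X) (actX : S → X → X)
    (domY : S → Set Y) (actY : S → Y → Y) (φ : X → Y) : Prop :=
  ∀ s : S, (∀ x ∈ domX s, φ x ∈ domY s) ∧ (∀ x ∈ domX s, φ (actX s x) = actY s (φ x))

/-- An embedding of partial actions. -/
def IsEmbedding (G : Semigroupoid S) (domX : S → Set X) (actX : S → X → X)
    (domY : S → Set Y) (actY : S → Y → Y) (φ : X → Y) : Prop :=
  Function.Injective φ ∧ IsMorphism G domX actX domY actY φ ∧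
    ∀ s : S, domX s = {x | φ x ∈ domY s ∧ actY s (φ x) ∈ Set.range φ}

end Morphisms

/-- The relation `∼` on `S`: `s ∼ t` iff `s = t`, or `S^s = S^t ≠ ∅`, or `s = ut`. -/
def simRel (G : Semigroupoid S) (s t : S) : Prop :=
  s = t ∨ (G.rightComp s = G.rightComp t ∧ (G.rightComp s).Nonempty) ∨
    ∃ u : S, G.comp u t ∧ s = G.mul u t

/-- `R`: the smallest equivalence relation containing `∼`. -/
def Rrel (G : Semigroupoid S) : S → S → Prop := Relation.EqvGen (simRel G)

/-- `₍ρₛ₎X = ⋃ ({ₜX : t R s} ∪ {X_t : t ∈ S^s})`. -/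
def rhoDom (G : Semigroupoid S) (dom : S → Set X) (act : S → X → X) (s : S) : Set X :=
  {x | (∃ t : S, Rrel G t s ∧ x ∈ dom t) ∨ (∃ t : S, G.comp s t ∧ x ∈ img dom act t)}

/-- The set `D ⊆ S^δ × X`, where `S^δ = S ∪ {δ}` is encoded as `Option S`
(with `none` playing the role of the extra symbol `δ`). -/
def DSet (G : Semigroupoid S) (dom : S → Set X) (act : S → X → X) : Set (Option S × X) :=
  {p | ∀ s : S, p.1 = some s → p.2 ∈ rhoDom G dom act s}

theorem noneMem (G : Semigroupoid S) (dom : S → Set X) (act : S → X → X) (x : X) :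
    ((none : Option S), x) ∈ DSet G dom act := by
  intro s h
  simp at h

/-- Generating relation for `≈`:
(1) `(δ, α_s x) ∼ (s, x)` for `x ∈ ₛX`;
(2) `(tu, x) ∼ (t, α_u x)` for `u ∈ S^t` and `x ∈ ᵤX`. -/
def preRel (G : Semigroupoid S) (dom : S → Set X) (act : S → X → X) :
    Option S × X → Option S × X → Prop := fun p q =>
  (∃ (s : S) (x : X), x ∈ dom s ∧ p = (none, act s x) ∧ q = (some s, x)) ∨
  (∃ (t u : S) (x : X), G.comp t u ∧ x ∈ dom u ∧
      p = (some (G.mul t u), x) ∧ q = (some t, act u x))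

/-- `≈`: the smallest equivalence relation containing the generating relation. -/
def approx (G : Semigroupoid S) (dom : S → Set X) (act : S → X → X) :
    Option S × X → Option S × X → Prop :=
  Relation.EqvGen (preRel G dom act)

/-- The setoid on `D` induced by `≈`. -/
def DSetoid (G : Semigroupoid S) (dom : S → Set X) (act : S → X → X) :
    Setoid (DSet G dom act) :=
  Setoid.comap Subtype.val (Relation.EqvGen.setoid (preRel G dom act))

/-- `E = D/≈`. -/
def EType (G : Semigroupoid S) (dom : S → Set X) (act : S → X → X) : Type _ :=
  Quotient (DSetoid G dom act)

/-- The class `[a,x] ∈ E` of `(a,x) ∈ D`. -/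
def mkE (G : Semigroupoid S) (dom : S → Set X) (act : S → X → X)
    (p : DSet G dom act) : EType G dom act :=
  Quotient.mk (DSetoid G dom act) p

/-- `ₛE = {[a,x] : (a,x) ≈ (t,y) for some t ∈ S^s} ∪ {[δ,x] : x ∈ ₍ρₛ₎X}`. -/
def domE (G : Semigroupoid S) (dom : S → Set X) (act : S → X → X) (s : S) :
    Set (EType G dom act) :=
  {e | (∃ (p : DSet G dom act) (t : S) (y : X),
          G.comp s t ∧ approx G dom act p.val (some t, y) ∧ e = mkE G dom act p) ∨
       (∃ x : X, x ∈ rhoDom G dom act s ∧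
          e = mkE G dom act ⟨(none, x), noneMem G dom act x⟩)}

/-- `δ : X → E`, `x ↦ [δ,x]`. -/
def deltaMap (G : Semigroupoid S) (dom : S → Set X) (act : S → X → X) (x : X) :
    EType G dom act :=
  mkE G dom act ⟨(none, x), noneMem G dom act x⟩

end Semigroupoid

namespace Semigroupoid

variable {S : Type u} {X : Type v}

lemma mem_rho_of_dom (G : Semigroupoid S) (dom : S → Set X) (act : S → X → X)
    {s : S} {x : X} (hx : x ∈ dom s) : x ∈ rhoDom G dom act s :=
  Or.inl ⟨s, Relation.EqvGen.refl s, hx⟩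

lemma preRel_mem (G : Semigroupoid S) (dom : S → Set X) (act : S → X → X)
    {a b : Option S × X} (h : preRel G dom act a b) :
    a ∈ DSet G dom act ∧ b ∈ DSet G dom act := by
  rcases h with ⟨s, x, hx, rfl, rfl⟩ | ⟨t, u, x, htu, hx, rfl, rfl⟩
  · refine ⟨noneMem G dom act _, fun s' hs' => ?_⟩
    injection hs' with hs'; subst hs'
    exact mem_rho_of_dom G dom act hx
  · constructor
    · intro s' hs'; injection hs' with hs'; subst hs'
      exact Or.inl ⟨u, Relation.EqvGen.symm _ _
        (Relation.EqvGen.rel _ _ (Or.inr (Or.inr ⟨t, htu, rfl⟩))), hx⟩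
    · intro s' hs'; injection hs' with hs'; subst hs'
      exact Or.inr ⟨u, htu, x, hx, rfl⟩

lemma approx_mem (G : Semigroupoid S) (dom : S → Set X) (act : S → X → X)
    {a b : Option S × X} (h : approx G dom act a b) :
    a = b ∨ (a ∈ DSet G dom act ∧ b ∈ DSet G dom act) := by
  induction h with
  | rel a b h => exact Or.inr (preRel_mem G dom act h)
  | refl a => exact Or.inl rfl
  | symm a b h ih =>
    rcases ih with rfl | ⟨h1, h2⟩
    · exact Or.inl rfl
    · exact Or.inr ⟨h2, h1⟩
  | trans a b c h1 h2 ih1 ih2 =>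
    rcases ih1 with rfl | ⟨ha, hb⟩
    · exact ih2
    · rcases ih2 with rfl | ⟨hb', hc⟩
      · exact Or.inr ⟨ha, hb⟩
      · exact Or.inr ⟨ha, hc⟩

lemma approx_fixed (G : Semigroupoid S) (dom : S → Set X) (act : S → X → X)
    {x : X} (hx : ∀ s : S, x ∉ img dom act s)
    {a b : Option S × X} (h : approx G dom act a b) :
    a = ((none : Option S), x) ↔ b = ((none : Option S), x) := by
  induction h with
  | rel a b h =>
    constructor
    · rintro rfl
      rcases h with ⟨s, y, hy, he, _⟩ | ⟨t, u, y, _, _, he, _⟩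
      · exact absurd ⟨y, hy, (congrArg Prod.snd he).symm⟩ (hx s)
      · exact absurd (congrArg Prod.fst he) (by simp)
    · rintro rfl
      rcases h with ⟨s, y, hy, _, he⟩ | ⟨t, u, y, _, _, _, he⟩
      · exact absurd (congrArg Prod.fst he) (by simp)
      · exact absurd (congrArg Prod.fst he) (by simp)
  | refl a => exact Iff.rfl
  | symm a b h ih => exact ih.symm
  | trans a b c h1 h2 ih1 ih2 => exact ih1.trans ih2

lemma mkE_exact (G : Semigroupoid S) (dom : S → Set X) (act : S → X → X)
    {p q : DSet G dom act} (h : mkE G dom act p = mkE G dom act q) :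
    approx G dom act p.val q.val :=
  Quotient.exact h

lemma mkE_sound (G : Semigroupoid S) (dom : S → Set X) (act : S → X → X)
    {p q : DSet G dom act} (h : approx G dom act p.val q.val) :
    mkE G dom act p = mkE G dom act q :=
  Quotient.sound h

end Semigroupoid

open Semigroupoid in
/-- With `X₁ = ⋃ₛ(ₛX ∪ X_s)`, `X₀ = X \ X₁`, `E₁ = ⋃ₛ(ₛE ∪ E_s)`, `E₀ = E \ E₁`, one has
`δ(X₀) = E₀`; consequently `(α,X)` is non-degenerate iff `(β,E)` is non-degenerate. -/
theorem statement17 {S : Type u} {X : Type v} (G : Semigroupoid S)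
    (dom : S → Set X) (act : S → X → X) (hα : IsPartialAction G dom act)
    (βE : S → EType G dom act → EType G dom act)
    (hspec1 : ∀ (s t : S) (y : X), G.comp s t →
      ∀ hD : ((some t : Option S), y) ∈ DSet G dom act,
        ∃ hD' : ((some (G.mul s t) : Option S), y) ∈ DSet G dom act,
          βE s (mkE G dom act ⟨(some t, y), hD⟩) =
            mkE G dom act ⟨(some (G.mul s t), y), hD'⟩)
    (hspec2 : ∀ (s : S) (x : X), x ∈ rhoDom G dom act s →
      ∃ hD' : ((some s : Option S), x) ∈ DSet G dom act,
        βE s (deltaMap G dom act x) = mkE G dom act ⟨(some s, x), hD'⟩)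
    (hglob : IsGlobalAction G (domE G dom act) βE) :
    deltaMap G dom act '' (Set.univ \ ⋃ s : S, dom s ∪ img dom act s) =
      Set.univ \ ⋃ s : S, domE G dom act s ∪ img (domE G dom act) βE s ∧
    ((Set.univ \ ⋃ s : S, dom s ∪ img dom act s) = ∅ ↔
      (Set.univ \ ⋃ s : S, domE G dom act s ∪ img (domE G dom act) βE s) = ∅) := by
  classical
  have main : deltaMap G dom act '' (Set.univ \ ⋃ s : S, dom s ∪ img dom act s) =
      Set.univ \ ⋃ s : S, domE G dom act s ∪ img (domE G dom act) βE s := by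
    apply Set.Subset.antisymm
    · rintro e ⟨x, hx0, rfl⟩
      have hx : ∀ s, x ∉ dom s ∪ img dom act s := by
        intro s hs
        exact hx0.2 (Set.mem_iUnion.mpr ⟨s, hs⟩)
      have hxi : ∀ s, x ∉ img dom act s := fun s hi => hx s (Or.inr hi)
      refine ⟨trivial, fun hmem => ?_⟩
      obtain ⟨s, hs⟩ := Set.mem_iUnion.mp hmem
      rcases hs with hdom | himg
      · rcases hdom with ⟨p, t, y, hst, happ, he⟩ | ⟨x', hx', he⟩
        · have h1 : approx G dom act ((none : Option S), x) p.val :=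
            mkE_exact G dom act he
          have h2 : approx G dom act ((none : Option S), x) ((some t : Option S), y) :=
            Relation.EqvGen.trans _ _ _ h1 happ
          exact absurd
            (congrArg Prod.fst ((approx_fixed G dom act hxi h2).mp rfl)) (by simp)
        · have h1 : approx G dom act ((none : Option S), x) ((none : Option S), x') :=
            mkE_exact G dom act he
        -- x = x'
          have h2 : ((none : Option S), x') = ((none : Option S), x) :=
            (approx_fixed G dom act hxi h1).mp rfl
          have hxx : x' = x := congrArg Prod.snd h2
          subst hxx
          rcases hx' with ⟨t, _, hd⟩ | ⟨t, _, hi⟩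
          · exact hx t (Or.inl hd)
          · exact hx t (Or.inr hi)
      · obtain ⟨e', he', heq⟩ := himg
        rcases he' with ⟨p, t, y, hst, happ, he⟩ | ⟨x', hx', he⟩
        · have hD : ((some t : Option S), y) ∈ DSet G dom act := by
            rcases approx_mem G dom act happ with hpv | ⟨_, hb⟩
            · exact hpv ▸ p.2
            · exact hb
          obtain ⟨hD', heq1⟩ := hspec1 s t y hst hD
          have h3 : βE s e' = mkE G dom act ⟨(some (G.mul s t), y), hD'⟩ := by
            rw [he, mkE_sound G dom act (p := p) (q := ⟨(some t, y), hD⟩) happ]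
            exact heq1
          have happ2 : approx G dom act ((none : Option S), x)
              ((some (G.mul s t) : Option S), y) :=
            mkE_exact G dom act (p := ⟨(none, x), noneMem G dom act x⟩)
              (q := ⟨(some (G.mul s t), y), hD'⟩) (heq.symm.trans h3)
          exact absurd
            (congrArg Prod.fst ((approx_fixed G dom act hxi happ2).mp rfl)) (by simp)
        · obtain ⟨hD', heq2⟩ := hspec2 s x' hx'
          have h3 : βE s e' = mkE G dom act ⟨(some s, x'), hD'⟩ := by
            rw [he]; exact heq2
          have happ2 : approx G dom act ((none : Option S), x)
              ((some s : Option S), x') :=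
            mkE_exact G dom act (p := ⟨(none, x), noneMem G dom act x⟩)
              (q := ⟨(some s, x'), hD'⟩) (heq.symm.trans h3)
          exact absurd
            (congrArg Prod.fst ((approx_fixed G dom act hxi happ2).mp rfl)) (by simp)
    · rintro e ⟨-, he1⟩
      obtain ⟨p, rfl⟩ := Quotient.exists_rep e
      obtain ⟨⟨o, x⟩, hp⟩ := p
      match o with
      | some s =>
        exfalso
        have hrho : x ∈ rhoDom G dom act s := hp s rfl
        obtain ⟨hD', heq⟩ := hspec2 s x hrho
        refine he1 (Set.mem_iUnion.mpr ⟨s, Or.inr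
          ⟨deltaMap G dom act x, Or.inr ⟨x, hrho, rfl⟩, ?_⟩⟩)
        rw [heq]
        exact congrArg (mkE G dom act) (Subtype.ext rfl)
      | none =>
        refine ⟨x, ⟨trivial, fun hmem => ?_⟩, congrArg (mkE G dom act) (Subtype.ext rfl)⟩
        obtain ⟨s, hs | hs⟩ := Set.mem_iUnion.mp hmem
        · refine he1 (Set.mem_iUnion.mpr ⟨s, Or.inl (Or.inr
            ⟨x, mem_rho_of_dom G dom act hs, ?_⟩)⟩)
          exact (congrArg (mkE G dom act) (Subtype.ext rfl)).symm
        · obtain ⟨y, hy, hxy⟩ := hs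
          have hrel : preRel G dom act ((none : Option S), x) ((some s : Option S), y) :=
            Or.inl ⟨s, y, hy, by rw [hxy], rfl⟩
          obtain ⟨hD', heq⟩ := hspec2 s y (mem_rho_of_dom G dom act hy)
          refine he1 (Set.mem_iUnion.mpr ⟨s, Or.inr
            ⟨deltaMap G dom act y, Or.inr ⟨y, mem_rho_of_dom G dom act hy, rfl⟩, ?_⟩⟩)
          rw [heq]
          refine (mkE_sound G dom act (p := ⟨(some s, y), hD'⟩)
            (q := ⟨(none, x), hp⟩) ?_)
          exact Relation.EqvGen.symm _ _ (Relation.EqvGen.rel _ _ hrel)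
  refine ⟨main, ?_⟩
  rw [← main]
  exact Set.image_eq_empty.symm
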